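/- Let d ≥ 1 and p ∈ [1, ∞) be a real number. There exists a constant C, depending only on p and d, such that for all smooth functions a, f : ℝ^d → ℝ that are 2π-periodic in each coordinate, and every positive integer σ, one has | ‖x ↦ a(x) f(σx)‖_{L^p} − (2π)^{−d/p} ‖a‖_{L^p} ‖f‖_{L^p} | ≤ C σ^{−1/p} ‖a‖_{C¹} ‖f‖_{L^p}, where ‖g‖_{L^p} = (∫_{[0,2π]^d} |g(x)|^p dx)^{1/p} and ‖a‖_{C¹} = sup_{x} (|a(x)| + |∇a(x)|). -/

import Mathlib

open scoped BigOperators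
open MeasureTheory Real

/-- `L^p` norm on the fundamental domain `[0, 2π]^d` of the torus. -/
noncomputable def LpBox (d : ℕ) (p : ℝ) (g : (Fin d → ℝ) → ℝ) : ℝ :=
  (∫ x in Set.Icc (0 : Fin d → ℝ) (fun _ => 2 * π), |g x| ^ p) ^ (1 / p)

/-- `C¹` norm `sup_x (|a x| + |∇a x|)` of a function on `ℝ^d`. -/
noncomputable def C1Norm (d : ℕ) (a : (Fin d → ℝ) → ℝ) : ℝ :=
  ⨆ x : Fin d → ℝ, (|a x| + ‖fderiv ℝ a x‖)

open Set

lemma one_le_coe_top : (1 : WithTop ℕ∞) ≤ ((⊤ : ℕ∞) : WithTop ℕ∞) := by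
  exact_mod_cast (le_top : (1 : ℕ∞) ≤ ⊤)

section Aux

variable {d : ℕ} {α : Sort*}

lemma per_single_int (c : ℝ) (g : (Fin d → ℝ) → α)
    (hg : ∀ x i, g (x + Pi.single i c) = g x) (x : Fin d → ℝ) (i : Fin d) (n : ℤ) :
    g (x + Pi.single i ((n : ℝ) * c)) = g x := by
  have neg : ∀ y, g (y + Pi.single i (-c)) = g y := by
    intro y
    have := hg (y + Pi.single i (-c)) i
    rw [add_assoc, ← Pi.single_add, neg_add_cancel, Pi.single_zero, add_zero] at this
    exact this.symm
  induction n using Int.induction_on with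
  | zero => simp
  | succ m ih =>
      have e : (((m : ℤ) + 1 : ℤ) : ℝ) * c = (m : ℝ) * c + c := by push_cast; ring
      rw [e, Pi.single_add, ← add_assoc, hg _ i]
      simpa using ih
  | pred m ih =>
      have e : ((-(m : ℤ) - 1 : ℤ) : ℝ) * c = (-(m : ℤ) : ℝ) * c + -c := by push_cast; ring
      rw [e, Pi.single_add, ← add_assoc, neg]
      simpa using ih

lemma per_int (c : ℝ) (g : (Fin d → ℝ) → α)
    (hg : ∀ x i, g (x + Pi.single i c) = g x) (k : Fin d → ℤ) (x : Fin d → ℝ) :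
    g (x + fun i => (k i : ℝ) * c) = g x := by
  have e : (fun i => (k i : ℝ) * c) = ∑ i : Fin d, Pi.single i ((k i : ℝ) * c) := by
    rw [Finset.univ_sum_single (fun i => (k i : ℝ) * c)]
  rw [e]
  clear e
  induction (Finset.univ : Finset (Fin d)) using Finset.induction_on with
  | empty => simp
  | insert _ _ ha ih =>
      rw [Finset.sum_insert ha, add_comm (Pi.single _ _), ← add_assoc]
      exact (per_single_int c g hg _ _ _).trans ih


lemma per_reduce (c : ℝ) (hc : 0 < c) (g : (Fin d → ℝ) → α)
    (hg : ∀ x i, g (x + Pi.single i c) = g x) (x : Fin d → ℝ) :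
    ∃ y ∈ Set.Icc (0 : Fin d → ℝ) (fun _ => c), g y = g x := by
  have hmain := per_int c g hg (fun i => -⌊x i / c⌋) x
  refine ⟨_, ?_, hmain⟩
  constructor
  · intro i
    have h1 : (⌊x i / c⌋ : ℝ) ≤ x i / c := Int.floor_le _
    have := mul_le_mul_of_nonneg_right h1 hc.le
    rw [div_mul_cancel₀ _ hc.ne'] at this
    simpa [Pi.add_apply] using by push_cast; linarith
  · intro i
    have h2 : x i / c < (⌊x i / c⌋ : ℝ) + 1 := Int.lt_floor_add_one _
    have := mul_lt_mul_of_pos_right h2 hc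
    rw [div_mul_cancel₀ _ hc.ne'] at this
    simpa [Pi.add_apply] using by push_cast; nlinarith

lemma fderiv_periodic {a : (Fin d → ℝ) → ℝ} (ha : ContDiff ℝ (⊤ : ℕ∞) a)
    (hper : ∀ x i, a (x + Pi.single i (2 * π)) = a x) (x : Fin d → ℝ) (i : Fin d) :
    fderiv ℝ a (x + Pi.single i (2 * π)) = fderiv ℝ a x := by
  have hdiff : Differentiable ℝ a := ha.differentiable (by simp)
  have h1 : HasFDerivAt (fun y => a (y + Pi.single i (2 * π)))
      (fderiv ℝ a (x + Pi.single i (2 * π))) x := by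
    have h2 : HasFDerivAt a (fderiv ℝ a (x + Pi.single i (2 * π))) (x + Pi.single i (2 * π)) :=
      (hdiff _).hasFDerivAt
    have h3 : HasFDerivAt (fun y : Fin d → ℝ => y + Pi.single i (2 * π))
        (ContinuousLinearMap.id ℝ (Fin d → ℝ)) x := (hasFDerivAt_id x).add_const _
    simpa [Function.comp_def] using h2.comp x h3
  have h4 : (fun y => a (y + Pi.single i (2 * π))) = a := funext fun y => hper y i
  rw [h4] at h1
  exact (h1.fderiv).symm

lemma C1_bound {a : (Fin d → ℝ) → ℝ} (ha : ContDiff ℝ (⊤ : ℕ∞) a)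
    (hper : ∀ x i, a (x + Pi.single i (2 * π)) = a x) (x : Fin d → ℝ) :
    |a x| + ‖fderiv ℝ a x‖ ≤ C1Norm d a := by
  set F : (Fin d → ℝ) → ℝ := fun x => |a x| + ‖fderiv ℝ a x‖ with hF
  have hFc : Continuous F := by
    have h1 : Continuous fun x => fderiv ℝ a x := ha.continuous_fderiv (by simp)
    exact ha.continuous.abs.add h1.norm
  have hFper : ∀ x i, F (x + Pi.single i (2 * π)) = F x := by
    intro x i
    simp only [hF, hper x i, fderiv_periodic ha hper x i]
  have hrange : Set.range F ⊆ F '' Set.Icc (0 : Fin d → ℝ) (fun _ => 2 * π) := by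
    rintro - ⟨z, rfl⟩
    obtain ⟨y, hy, hgy⟩ := per_reduce (2 * π) Real.two_pi_pos F hFper z
    exact ⟨y, hy, hgy⟩
  have hbdd : BddAbove (Set.range F) :=
    ((isCompact_Icc.image hFc).bddAbove).mono hrange
  exact le_ciSup hbdd x

end Aux

section Rpow

lemma rpow_mono_bound {p M : ℝ} (hp : 1 ≤ p) (hM : 0 ≤ M) :
    ∀ s t : ℝ, 0 ≤ s → 0 ≤ t → s ≤ M → t ≤ M →
      |s ^ p - t ^ p| ≤ p * M ^ (p - 1) * |s - t| := by
  intro s t hs ht hsM htM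
  have key : ∀ x ∈ Set.Icc (0:ℝ) M, HasDerivWithinAt (fun u : ℝ => u ^ p)
      (p * x ^ (p - 1)) (Set.Icc 0 M) x := by
    intro x hx
    have := Real.hasDerivAt_rpow_const (x := x) (p := p) (Or.inr hp)
    simpa [mul_comm] using this.hasDerivWithinAt
  have bound : ∀ x ∈ Set.Icc (0:ℝ) M, ‖p * x ^ (p - 1)‖ ≤ p * M ^ (p - 1) := by
    intro x hx
    rw [Real.norm_eq_abs, abs_mul, abs_of_nonneg (by linarith : (0:ℝ) ≤ p),
      abs_of_nonneg (Real.rpow_nonneg hx.1 _)]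
    have : x ^ (p - 1) ≤ M ^ (p - 1) := Real.rpow_le_rpow hx.1 hx.2 (by linarith)
    nlinarith
  have := (convex_Icc (0:ℝ) M).norm_image_sub_le_of_norm_hasDerivWithin_le key bound
      (Set.mem_Icc.2 ⟨ht, htM⟩) (Set.mem_Icc.2 ⟨hs, hsM⟩)
  simpa [Real.norm_eq_abs] using this

lemma real_rpow_add_le {x y q : ℝ} (hx : 0 ≤ x) (hy : 0 ≤ y) (hq0 : 0 ≤ q) (hq1 : q ≤ 1) :
    (x + y) ^ q ≤ x ^ q + y ^ q := by
  have h := NNReal.rpow_add_le_add_rpow (x.toNNReal) (y.toNNReal) hq0 hq1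
  have h2 := NNReal.coe_le_coe.2 h
  simp only [NNReal.coe_rpow, NNReal.coe_add, Real.coe_toNNReal x hx,
    Real.coe_toNNReal y hy] at h2
  exact h2

lemma abs_rpow_root_sub {X Y q : ℝ} (hX : 0 ≤ X) (hY : 0 ≤ Y) (hq0 : 0 ≤ q) (hq1 : q ≤ 1) :
    |X ^ q - Y ^ q| ≤ |X - Y| ^ q := by
  have main : ∀ U V : ℝ, 0 ≤ U → 0 ≤ V → V ≤ U → U ^ q - V ^ q ≤ (U - V) ^ q := by
    intro U V hU hV hVU
    have h1 : U ^ q ≤ V ^ q + (U - V) ^ q := by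
      have : U = V + (U - V) := by ring
      calc U ^ q = (V + (U - V)) ^ q := by rw [← this]
        _ ≤ V ^ q + (U - V) ^ q := real_rpow_add_le hV (by linarith) hq0 hq1
    linarith
  rcases le_total Y X with h | h
  · rw [abs_of_nonneg (sub_nonneg.2 (Real.rpow_le_rpow hY h hq0)),
      abs_of_nonneg (sub_nonneg.2 h)]
    exact main X Y hX hY h
  · rw [abs_sub_comm, abs_sub_comm X Y,
      abs_of_nonneg (sub_nonneg.2 (Real.rpow_le_rpow hX h hq0)),
      abs_of_nonneg (sub_nonneg.2 h)]
    exact main Y X hY hX h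

end Rpow

section Unfold

open scoped Pointwise

variable {d : ℕ}

/-- the translated cell -/
def cell (d σ : ℕ) (k : Fin d → Fin σ) : Set (Fin d → ℝ) :=
  Set.univ.pi fun i => Ioc (2 * π * ((k i : ℕ) : ℝ)) (2 * π * ((k i : ℕ) : ℝ) + 2 * π)

lemma cell_union (d σ : ℕ) (hσ : 0 < σ) :
    (Set.univ.pi fun _ : Fin d => Ioc (0:ℝ) ((σ:ℝ) * (2 * π)))
      = ⋃ k : Fin d → Fin σ, cell d σ k := by
  have hc : (0:ℝ) < 2 * π := Real.two_pi_pos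
  ext x
  simp only [Set.mem_pi, Set.mem_univ, forall_true_left, Set.mem_iUnion, cell, Set.mem_Ioc,
    true_implies]
  constructor
  · intro hx
    have hex : ∀ i, ∃ m : Fin σ, 2 * π * ((m : ℕ) : ℝ) < x i ∧
        x i ≤ 2 * π * ((m : ℕ) : ℝ) + 2 * π := by
      intro i
      obtain ⟨h1, h2⟩ := hx i
      set t : ℝ := x i / (2 * π) with ht
      have ht0 : 0 < t := div_pos h1 hc
      have htσ : t ≤ (σ : ℝ) := by
        rw [div_le_iff₀ hc]; linarith [h2]
      have hn1 : 1 ≤ ⌈t⌉₊ := Nat.one_le_ceil_iff.2 ht0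
      have hnσ : ⌈t⌉₊ ≤ σ := Nat.ceil_le.2 htσ
      refine ⟨⟨⌈t⌉₊ - 1, by omega⟩, ?_, ?_⟩
      · have := Nat.ceil_lt_add_one ht0.le (R := ℝ)
        have hcast : ((⌈t⌉₊ - 1 : ℕ) : ℝ) = (⌈t⌉₊ : ℝ) - 1 := by
          push_cast [Nat.cast_sub hn1]; ring
        rw [hcast]
        have : (⌈t⌉₊ : ℝ) - 1 < t := by linarith
        calc 2 * π * ((⌈t⌉₊ : ℝ) - 1) < 2 * π * t := by nlinarith
          _ = x i := by rw [ht]; field_simp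
      · have hle : t ≤ (⌈t⌉₊ : ℝ) := Nat.le_ceil t
        have hcast : ((⌈t⌉₊ - 1 : ℕ) : ℝ) = (⌈t⌉₊ : ℝ) - 1 := by
          push_cast [Nat.cast_sub hn1]; ring
        rw [hcast]
        have hx' : x i = 2 * π * t := by rw [ht]; field_simp
        nlinarith
    choose k hk using hex
    exact ⟨k, fun i => hk i⟩
  · rintro ⟨k, hk⟩ i
    obtain ⟨h1, h2⟩ := hk i
    have hki : ((k i : ℕ) : ℝ) ≤ (σ : ℝ) - 1 := by
      have h0 : (k i : ℕ) < σ := (k i).2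
      have h3 : (k i : ℕ) ≤ σ - 1 := by omega
      calc ((k i : ℕ) : ℝ) ≤ ((σ - 1 : ℕ) : ℝ) := by exact_mod_cast h3
        _ = (σ : ℝ) - 1 := by
          rw [Nat.cast_sub hσ]; push_cast; ring
    constructor
    · have : (0:ℝ) ≤ 2 * π * ((k i : ℕ) : ℝ) := by positivity
      linarith
    · have : 2 * π * ((k i : ℕ) : ℝ) + 2 * π ≤ (σ:ℝ) * (2 * π) := by nlinarith [Real.two_pi_pos]
      linarith

lemma cell_disjoint (d σ : ℕ) : Pairwise (Function.onFun Disjoint (cell d σ)) := by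
  intro k l hkl
  rw [Function.onFun, Set.disjoint_left]
  intro x hxk hxl
  have : ∃ i, k i ≠ l i := by
    by_contra h
    push_neg at h
    exact hkl (funext h)
  obtain ⟨i, hi⟩ := this
  have h1 := (Set.mem_pi.1 hxk) i (Set.mem_univ i)
  have h2 := (Set.mem_pi.1 hxl) i (Set.mem_univ i)
  simp only [Set.mem_Ioc] at h1 h2
  have hπ := Real.two_pi_pos
  rcases Nat.lt_or_ge (k i : ℕ) (l i : ℕ) with h | h
  · have : ((k i : ℕ) : ℝ) + 1 ≤ ((l i : ℕ) : ℝ) := by exact_mod_cast h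
    nlinarith [h1.2, h2.1]
  · have hlt : (l i : ℕ) < (k i : ℕ) := by
      rcases Nat.lt_or_ge (l i : ℕ) (k i : ℕ) with h' | h'
      · exact h'
      · exact absurd (Fin.ext (le_antisymm h h')) hi.symm
    have : ((l i : ℕ) : ℝ) + 1 ≤ ((k i : ℕ) : ℝ) := by exact_mod_cast hlt
    nlinarith [h2.2, h1.1]

end Unfold

section Unfold2

variable {d : ℕ}

lemma pi_Ioc_ae_Icc (d : ℕ) (b : ℝ) :
    (Set.univ.pi fun _ : Fin d => Ioc (0:ℝ) b)
      =ᵐ[(volume : Measure (Fin d → ℝ))] Set.Icc (0 : Fin d → ℝ) (fun _ => b) := by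
  have h := MeasureTheory.Measure.univ_pi_Ioc_ae_eq_Icc
    (μ := fun _ : Fin d => (volume : Measure ℝ)) (f := fun _ => (0:ℝ)) (g := fun _ => b)
  rw [← MeasureTheory.volume_pi] at h
  exact h

lemma cell_translate (d σ : ℕ) (k : Fin d → Fin σ) (φ : (Fin d → ℝ) → ℝ)
    (hφ : Continuous φ) :
    ∫ x in cell d σ k, φ x
      = ∫ y in Set.Icc (0 : Fin d → ℝ) (fun _ => 2 * π),
          φ (y + fun i => 2 * π * ((k i : ℕ) : ℝ)) := by
  set v : Fin d → ℝ := fun i => 2 * π * ((k i : ℕ) : ℝ) with hv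
  have hmeas : MeasurableSet (cell d σ k) :=
    MeasurableSet.univ_pi fun i => measurableSet_Ioc
  have hIoc : MeasurableSet (Set.univ.pi fun _ : Fin d => Ioc (0:ℝ) (2*π)) :=
    MeasurableSet.univ_pi fun i => measurableSet_Ioc
  have key : ∀ x : Fin d → ℝ, Set.indicator (cell d σ k) φ (x + v)
      = Set.indicator (Set.univ.pi fun _ : Fin d => Ioc (0:ℝ) (2*π))
          (fun y => φ (y + v)) x := by
    intro x
    have hmemiff : x ∈ (Set.univ.pi fun _ : Fin d => Ioc (0:ℝ) (2*π)) ↔ x + v ∈ cell d σ k := by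
      simp only [Set.mem_pi, Set.mem_univ, true_implies, Set.mem_Ioc, cell, Pi.add_apply]
      constructor
      · intro h i
        have hvi : v i = 2 * π * ((k i : ℕ) : ℝ) := rfl
        constructor
        · rw [hvi]; linarith [(h i).1]
        · rw [hvi]; linarith [(h i).2]
      · intro h i
        have hvi : v i = 2 * π * ((k i : ℕ) : ℝ) := rfl
        have h1 := (h i).1
        have h2 := (h i).2
        rw [hvi] at h1 h2
        constructor <;> linarith
    by_cases hx : x ∈ (Set.univ.pi fun _ : Fin d => Ioc (0:ℝ) (2*π))
    · rw [Set.indicator_of_mem (hmemiff.1 hx), Set.indicator_of_mem hx]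
    · rw [Set.indicator_of_notMem (fun hmem => hx (hmemiff.2 hmem)),
        Set.indicator_of_notMem hx]
  calc ∫ x in cell d σ k, φ x
      = ∫ x, Set.indicator (cell d σ k) φ x := (integral_indicator hmeas).symm
    _ = ∫ x, Set.indicator (cell d σ k) φ (x + v) :=
        (integral_add_right_eq_self _ v).symm
    _ = ∫ x, Set.indicator (Set.univ.pi fun _ : Fin d => Ioc (0:ℝ) (2*π))
          (fun y => φ (y + v)) x := by simp_rw [key]
    _ = ∫ x in (Set.univ.pi fun _ : Fin d => Ioc (0:ℝ) (2*π)), φ (x + v) :=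
        integral_indicator hIoc
    _ = ∫ y in Set.Icc (0 : Fin d → ℝ) (fun _ => 2 * π), φ (y + v) :=
        setIntegral_congr_set (pi_Ioc_ae_Icc d (2*π))

lemma unfold_integral (d σ : ℕ) (hσ : 0 < σ) (φ : (Fin d → ℝ) → ℝ) (hφ : Continuous φ) :
    ∫ x in Set.Icc (0 : Fin d → ℝ) (fun _ => (σ:ℝ) * (2*π)), φ x
      = ∑ k : Fin d → Fin σ, ∫ y in Set.Icc (0 : Fin d → ℝ) (fun _ => 2 * π),
          φ (y + fun i => 2 * π * ((k i : ℕ) : ℝ)) := by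
  have h1 : ∫ x in Set.Icc (0 : Fin d → ℝ) (fun _ => (σ:ℝ) * (2*π)), φ x
      = ∫ x in (Set.univ.pi fun _ : Fin d => Ioc (0:ℝ) ((σ:ℝ) * (2*π))), φ x :=
    (setIntegral_congr_set (pi_Ioc_ae_Icc d ((σ:ℝ) * (2*π)))).symm
  rw [h1, cell_union d σ hσ]
  have hmeas : ∀ k : Fin d → Fin σ, MeasurableSet (cell d σ k) :=
    fun k => MeasurableSet.univ_pi fun i => measurableSet_Ioc
  have hint : IntegrableOn φ (⋃ k : Fin d → Fin σ, cell d σ k) volume := by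
    rw [← cell_union d σ hσ]
    refine IntegrableOn.mono_set ((hφ.continuousOn).integrableOn_compact
      (isCompact_Icc (a := (0 : Fin d → ℝ)) (b := fun _ => (σ:ℝ) * (2*π)))) ?_
    rw [← Set.pi_univ_Icc]
    exact Set.pi_mono fun i _ => Ioc_subset_Icc_self
  rw [integral_iUnion hmeas (cell_disjoint d σ) hint, tsum_fintype]
  exact Finset.sum_congr rfl fun k _ => cell_translate d σ k φ hφ

end Unfold2

section Scale

open scoped Pointwise

lemma smul_box (d σ : ℕ) (hσ : 0 < σ) :
    (σ:ℝ) • (Set.Icc (0 : Fin d → ℝ) (fun _ => 2*π))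
      = Set.Icc (0 : Fin d → ℝ) (fun _ => (σ:ℝ) * (2*π)) := by
  have hσR : (0:ℝ) < (σ:ℝ) := by exact_mod_cast hσ
  ext y
  rw [Set.mem_smul_set_iff_inv_smul_mem₀ hσR.ne']
  simp only [Set.mem_Icc, Pi.le_def, Pi.smul_apply, Pi.zero_apply, smul_eq_mul]
  constructor
  · rintro ⟨h1, h2⟩
    constructor
    · intro i
      have := h1 i
      nlinarith [this, inv_pos.2 hσR]
    · intro i
      have := h2 i
      have h3 : (σ:ℝ)⁻¹ * y i ≤ 2*π := this
      calc y i = (σ:ℝ) * ((σ:ℝ)⁻¹ * y i) := by field_simp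
        _ ≤ (σ:ℝ) * (2*π) := by nlinarith
  · rintro ⟨h1, h2⟩
    constructor
    · intro i
      have := h1 i
      positivity
    · intro i
      have := h2 i
      rw [inv_mul_le_iff₀ hσR]
      linarith

lemma scale_integral (d σ : ℕ) (hσ : 0 < σ) (ψ : (Fin d → ℝ) → ℝ) :
    ∫ x in Set.Icc (0 : Fin d → ℝ) (fun _ => 2*π), ψ ((σ:ℝ) • x)
      = ((σ:ℝ)^d)⁻¹ * ∫ y in Set.Icc (0 : Fin d → ℝ) (fun _ => (σ:ℝ)*(2*π)), ψ y := by
  have hσR : (0:ℝ) < (σ:ℝ) := by exact_mod_cast hσ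
  have h := MeasureTheory.Measure.setIntegral_comp_smul_of_pos (volume) ψ
    (Set.Icc (0 : Fin d → ℝ) (fun _ => 2*π)) hσR
  rw [smul_box d σ hσ] at h
  rw [h, Module.finrank_fin_fun, smul_eq_mul]

end Scale

section Key

lemma key_identity (d σ : ℕ) (hσ : 0 < σ) (G H : (Fin d → ℝ) → ℝ)
    (hG : Continuous G) (hH : Continuous H)
    (hHper : ∀ x i, H (x + Pi.single i (2 * π)) = H x) :
    ∫ x in Set.Icc (0 : Fin d → ℝ) (fun _ => 2*π), G x * H ((σ:ℝ) • x)
      = ((σ:ℝ)^d)⁻¹ * ∑ k : Fin d → Fin σ,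
          ∫ y in Set.Icc (0 : Fin d → ℝ) (fun _ => 2*π),
            G ((σ:ℝ)⁻¹ • (y + fun i => 2 * π * ((k i : ℕ) : ℝ))) * H y := by
  have hσR : (0:ℝ) < (σ:ℝ) := by exact_mod_cast hσ
  set ψ : (Fin d → ℝ) → ℝ := fun y => G ((σ:ℝ)⁻¹ • y) * H y with hψ
  have hψc : Continuous ψ := ((hG.comp (continuous_const_smul _))).mul hH
  have e1 : (fun x : Fin d → ℝ => G x * H ((σ:ℝ) • x)) = fun x => ψ ((σ:ℝ) • x) := by
    funext x
    rw [hψ]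
    simp only [inv_smul_smul₀ hσR.ne']
  rw [show (∫ x in Set.Icc (0 : Fin d → ℝ) (fun _ => 2*π), G x * H ((σ:ℝ) • x))
      = ∫ x in Set.Icc (0 : Fin d → ℝ) (fun _ => 2*π), ψ ((σ:ℝ) • x) by rw [e1]]
  rw [scale_integral d σ hσ ψ, unfold_integral d σ hσ ψ hψc]
  congr 1
  refine Finset.sum_congr rfl fun k _ => ?_
  refine setIntegral_congr_fun measurableSet_Icc fun y _ => ?_
  rw [hψ]
  have hper : H (y + fun i => 2 * π * ((k i : ℕ) : ℝ)) = H y := by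
    have e2 : (fun i => 2 * π * ((k i : ℕ) : ℝ))
        = fun i => (((k i : ℕ) : ℤ) : ℝ) * (2 * π) := by
      funext i; push_cast; ring
    rw [e2]
    exact per_int (2*π) H hHper (fun i => ((k i : ℕ) : ℤ)) y
  simp only [hper]

end Key

section Estimate

lemma vol_box (d : ℕ) :
    ((volume (Set.Icc (0 : Fin d → ℝ) (fun _ => 2*π))).toReal) = (2*π)^d := by
  rw [Real.volume_Icc_pi_toReal (fun i => by positivity)]
  simp [Finset.prod_const]

lemma key_estimate (d σ : ℕ) (hσ : 0 < σ) (G H : (Fin d → ℝ) → ℝ)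
    (hG : Continuous G) (hH : Continuous H)
    (hHper : ∀ x i, H (x + Pi.single i (2 * π)) = H x) (hHnn : ∀ x, 0 ≤ H x)
    (L : ℝ) (hL : 0 ≤ L) (hlip : ∀ u v, |G u - G v| ≤ L * ‖u - v‖) :
    |(∫ x in Set.Icc (0 : Fin d → ℝ) (fun _ => 2*π), G x * H ((σ:ℝ) • x))
        - ((2*π)^d)⁻¹ * (∫ x in Set.Icc (0 : Fin d → ℝ) (fun _ => 2*π), G x)
            * (∫ x in Set.Icc (0 : Fin d → ℝ) (fun _ => 2*π), H x)|
      ≤ 2 * π * L / σ * ∫ x in Set.Icc (0 : Fin d → ℝ) (fun _ => 2*π), H x := by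
  have hσR : (0:ℝ) < (σ:ℝ) := by exact_mod_cast hσ
  have hπ := Real.two_pi_pos
  set B := Set.Icc (0 : Fin d → ℝ) (fun _ => 2*π) with hB
  set Gk : (Fin d → Fin σ) → (Fin d → ℝ) → ℝ :=
    fun k y => G ((σ:ℝ)⁻¹ • (y + fun i => 2 * π * ((k i : ℕ) : ℝ))) with hGk
  have hGkc : ∀ k, Continuous (Gk k) := by
    intro k
    exact hG.comp (by fun_prop)
  set F := ∫ x in B, H x with hF
  have hFnn : 0 ≤ F := setIntegral_nonneg measurableSet_Icc fun y _ => hHnn y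
  -- identities
  have hX : ∫ x in B, G x * H ((σ:ℝ) • x)
      = ((σ:ℝ)^d)⁻¹ * ∑ k : Fin d → Fin σ, ∫ y in B, Gk k y * H y :=
    key_identity d σ hσ G H hG hH hHper
  have hA : ∫ x in B, G x
      = ((σ:ℝ)^d)⁻¹ * ∑ k : Fin d → Fin σ, ∫ y in B, Gk k y := by
    have h1 := key_identity d σ hσ G (fun _ => 1) hG continuous_const (fun x i => rfl)
    simp only [mul_one] at h1
    exact h1
  -- per-cell averages
  set m : (Fin d → Fin σ) → ℝ := fun k => ((2*π)^d)⁻¹ * ∫ z in B, Gk k z with hm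
  -- pointwise estimate
  have hnorm_le : ∀ y ∈ B, ∀ z ∈ B, ‖y - z‖ ≤ 2*π := by
    intro y hy z hz
    rw [hB, Set.mem_Icc] at hy hz
    refine (pi_norm_le_iff_of_nonneg (by positivity)).2 fun i => ?_
    have h1 : (0:ℝ) ≤ y i := hy.1 i
    have h2 : y i ≤ 2*π := hy.2 i
    have h3 : (0:ℝ) ≤ z i := hz.1 i
    have h4 : z i ≤ 2*π := hz.2 i
    rw [Real.norm_eq_abs, Pi.sub_apply]
    exact abs_le.2 ⟨by linarith, by linarith⟩
  have hGk_close : ∀ k, ∀ y ∈ B, ∀ z ∈ B, |Gk k y - Gk k z| ≤ 2 * π * L / σ := by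
    intro k y hy z hz
    have e : ((σ:ℝ)⁻¹ • (y + fun i => 2 * π * ((k i : ℕ) : ℝ)))
        - ((σ:ℝ)⁻¹ • (z + fun i => 2 * π * ((k i : ℕ) : ℝ))) = (σ:ℝ)⁻¹ • (y - z) := by
      rw [← smul_sub]
      congr 1
      abel
    have := hlip ((σ:ℝ)⁻¹ • (y + fun i => 2 * π * ((k i : ℕ) : ℝ)))
      ((σ:ℝ)⁻¹ • (z + fun i => 2 * π * ((k i : ℕ) : ℝ)))
    rw [e, norm_smul, Real.norm_eq_abs, abs_of_nonneg (inv_nonneg.2 hσR.le)] at this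
    refine this.trans ?_
    have h5 := hnorm_le y hy z hz
    have h6 : ‖y - z‖ ≥ 0 := norm_nonneg _
    rw [div_eq_mul_inv]
    have : L * ((σ:ℝ)⁻¹ * ‖y - z‖) = L * ‖y - z‖ * (σ:ℝ)⁻¹ := by ring
    rw [this]
    have h7 : L * ‖y - z‖ ≤ L * (2*π) := by nlinarith
    have h8 : (0:ℝ) ≤ (σ:ℝ)⁻¹ := inv_nonneg.2 hσR.le
    nlinarith
  -- integrability on B
  have hintH : IntegrableOn H B := (hH.continuousOn).integrableOn_compact isCompact_Icc
  have hintGk : ∀ k, IntegrableOn (Gk k) B :=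
    fun k => (((hGkc k)).continuousOn).integrableOn_compact isCompact_Icc
  have hintGkH : ∀ k, IntegrableOn (fun y => Gk k y * H y) B :=
    fun k => (((hGkc k).mul hH).continuousOn).integrableOn_compact isCompact_Icc
  -- average closeness
  have hm_close : ∀ k, ∀ y ∈ B, |Gk k y - m k| ≤ 2 * π * L / σ := by
    intro k y hy
    have hvol : (volume B).toReal = (2*π)^d := vol_box d
    have e1 : Gk k y - m k
        = ((2*π)^d)⁻¹ * ∫ z in B, (Gk k y - Gk k z) := by
      have hcI : IntegrableOn (fun _ => Gk k y) B volume :=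
        integrableOn_const (by rw [hB]; exact measure_Icc_lt_top.ne)
      rw [integral_sub hcI (hintGk k)]
      rw [setIntegral_const, measureReal_def, hvol, smul_eq_mul, hm]
      have : ((2*π)^d) ≠ 0 := by positivity
      field_simp
    rw [e1, abs_mul, abs_of_nonneg (by positivity : (0:ℝ) ≤ ((2*π)^d)⁻¹)]
    have h2 : |∫ z in B, (Gk k y - Gk k z)| ≤ (2*π)^d * (2 * π * L / σ) := by
      have h3 : |∫ z in B, (Gk k y - Gk k z)| ≤ ∫ z in B, |Gk k y - Gk k z| := by
        simpa [Real.norm_eq_abs] using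
          norm_integral_le_integral_norm (μ := volume.restrict B) (fun z => Gk k y - Gk k z)
      refine h3.trans ?_
      have h4 : ∫ z in B, |Gk k y - Gk k z| ≤ ∫ z in B, (2 * π * L / σ) := by
        refine setIntegral_mono_on ?_ ?_ measurableSet_Icc fun z hz => hGk_close k y hy z hz
        · exact (((continuous_const.sub (hGkc k)).abs).continuousOn).integrableOn_compact
            isCompact_Icc
        · exact integrableOn_const (by rw [hB]; exact measure_Icc_lt_top.ne)
      refine h4.trans ?_
      rw [setIntegral_const, measureReal_def, hvol, smul_eq_mul]
    calc ((2*π)^d)⁻¹ * |∫ z in B, (Gk k y - Gk k z)|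
        ≤ ((2*π)^d)⁻¹ * ((2*π)^d * (2 * π * L / σ)) := by
          have : (0:ℝ) ≤ ((2*π)^d)⁻¹ := by positivity
          nlinarith
      _ = 2 * π * L / σ := by
          have : ((2*π)^d) ≠ 0 := by positivity
          field_simp
  -- per-cell integral bound
  have hcell : ∀ k, |(∫ y in B, Gk k y * H y) - m k * F| ≤ (2 * π * L / σ) * F := by
    intro k
    have e2 : (fun y => (Gk k y - m k) * H y) = fun y => Gk k y * H y - m k * H y := by
      funext y; ring
    have e1 : ∫ y in B, (Gk k y - m k) * H y = (∫ y in B, Gk k y * H y) - m k * F := by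
      rw [e2, integral_sub (hintGkH k) (hintH.const_mul (m k)), integral_const_mul, hF]
    rw [← e1]
    have h3 : |∫ y in B, (Gk k y - m k) * H y| ≤ ∫ y in B, |(Gk k y - m k) * H y| := by
      have := norm_integral_le_integral_norm (μ := volume.restrict B)
        (fun y => (Gk k y - m k) * H y)
      simpa only [Real.norm_eq_abs] using this
    refine h3.trans ?_
    have h4 : ∫ y in B, |(Gk k y - m k) * H y| ≤ ∫ y in B, (2 * π * L / σ) * H y := by
      refine setIntegral_mono_on ?_ (hintH.const_mul _) measurableSet_Icc fun y hy => ?_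
      · exact ((((hGkc k).sub continuous_const).mul hH).abs.continuousOn).integrableOn_compact
          isCompact_Icc
      · rw [abs_mul, abs_of_nonneg (hHnn y)]
        exact mul_le_mul_of_nonneg_right (hm_close k y hy) (hHnn y)
    refine h4.trans (le_of_eq ?_)
    rw [integral_const_mul]
  -- assemble
  rw [hX, hA]
  set Sa := ∑ k : Fin d → Fin σ, ∫ y in B, Gk k y * H y with hSa
  set Sb := ∑ k : Fin d → Fin σ, ∫ y in B, Gk k y with hSb
  have hsum : ∑ k : Fin d → Fin σ, ((∫ y in B, Gk k y * H y) - m k * F)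
      = Sa - (((2*π)^d)⁻¹ * Sb) * F := by
    rw [Finset.sum_sub_distrib, ← Finset.sum_mul, hSa, hSb]
    congr 2
    rw [hm, ← Finset.mul_sum]
  have e3 : ((σ:ℝ)^d)⁻¹ * Sa - ((2*π)^d)⁻¹ * (((σ:ℝ)^d)⁻¹ * Sb) * F
      = ((σ:ℝ)^d)⁻¹ * ∑ k : Fin d → Fin σ, ((∫ y in B, Gk k y * H y) - m k * F) := by
    rw [hsum]; ring
  rw [e3]
  have hinv : (0:ℝ) ≤ ((σ:ℝ)^d)⁻¹ := by positivity
  calc |((σ:ℝ)^d)⁻¹ * ∑ k : Fin d → Fin σ, ((∫ y in B, Gk k y * H y) - m k * F)|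
      = ((σ:ℝ)^d)⁻¹ * |∑ k : Fin d → Fin σ, ((∫ y in B, Gk k y * H y) - m k * F)| := by
        rw [abs_mul, abs_of_nonneg hinv]
    _ ≤ ((σ:ℝ)^d)⁻¹ * ∑ k : Fin d → Fin σ, |(∫ y in B, Gk k y * H y) - m k * F| :=
        mul_le_mul_of_nonneg_left (Finset.abs_sum_le_sum_abs _ _) hinv
    _ ≤ ((σ:ℝ)^d)⁻¹ * ∑ _k : Fin d → Fin σ, (2 * π * L / σ) * F :=
        mul_le_mul_of_nonneg_left (Finset.sum_le_sum fun k _ => hcell k) hinv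
    _ = ((σ:ℝ)^d)⁻¹ * ((σ:ℝ)^d * ((2 * π * L / σ) * F)) := by
        rw [Finset.sum_const, nsmul_eq_mul]
        congr 2
        simp [Fintype.card_pi, Fintype.card_fin]
    _ = 2 * π * L / σ * F := by
        have hne : ((σ:ℝ)^d) ≠ 0 := by positivity
        field_simp

end Estimate

/-- Improved Hölder inequality on the torus `T^d`: for smooth `2π`-periodic `a, f` and
`σ ∈ ℕ⁺`, `| ‖a f(σ·)‖_{L^p} − (2π)^{−d/p} ‖a‖_{L^p} ‖f‖_{L^p} | ≤ C σ^{−1/p} ‖a‖_{C¹} ‖f‖_{L^p}`,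
with `C = C(p, d)`. -/
theorem improved_holder (d : ℕ) (hd : 1 ≤ d) (p : ℝ) (hp : 1 ≤ p) :
    ∃ C : ℝ, ∀ a f : (Fin d → ℝ) → ℝ,
      ContDiff ℝ (⊤ : ℕ∞) a → ContDiff ℝ (⊤ : ℕ∞) f →
      (∀ x i, a (x + Pi.single i (2 * π)) = a x) →
      (∀ x i, f (x + Pi.single i (2 * π)) = f x) →
      ∀ σ : ℕ, 0 < σ →
        |LpBox d p (fun x => a x * f ((σ : ℝ) • x))
            - (2 * π) ^ (-(d : ℝ) / p) * LpBox d p a * LpBox d p f|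
          ≤ C * (σ : ℝ) ^ (-(1 / p)) * C1Norm d a * LpBox d p f := by
  have hπ := Real.two_pi_pos
  have hp0 : (0:ℝ) < p := lt_of_lt_of_le one_pos hp
  refine ⟨(2 * π * p) ^ (1 / p), ?_⟩
  intro a f ha hf haper hfper σ hσ
  have hσR : (0:ℝ) < (σ:ℝ) := by exact_mod_cast hσ
  set B := Set.Icc (0 : Fin d → ℝ) (fun _ => 2*π) with hB
  set Ca := C1Norm d a with hCa
  have hCa0 : 0 ≤ Ca := Real.iSup_nonneg fun x => by positivity
  have habs : ∀ x, |a x| ≤ Ca := fun x =>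
    (le_add_of_nonneg_right (norm_nonneg _)).trans (C1_bound ha haper x)
  have hfd : ∀ x, ‖fderiv ℝ a x‖ ≤ Ca := fun x =>
    (le_add_of_nonneg_left (abs_nonneg _)).trans (C1_bound ha haper x)
  have hadiff : Differentiable ℝ a := ha.differentiable (by simp)
  have halip : ∀ u v : Fin d → ℝ, |a u - a v| ≤ Ca * ‖u - v‖ := by
    intro u v
    have := Convex.norm_image_sub_le_of_norm_fderiv_le
      (fun x _ => hadiff.differentiableAt) (fun x _ => hfd x) convex_univ
      (Set.mem_univ v) (Set.mem_univ u)
    simpa [Real.norm_eq_abs] using this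
  set G : (Fin d → ℝ) → ℝ := fun x => |a x| ^ p with hG
  set H : (Fin d → ℝ) → ℝ := fun x => |f x| ^ p with hH
  have hGc : Continuous G := (ha.continuous.abs).rpow_const fun x => Or.inr hp0.le
  have hHc : Continuous H := (hf.continuous.abs).rpow_const fun x => Or.inr hp0.le
  have hHper : ∀ x i, H (x + Pi.single i (2 * π)) = H x := by
    intro x i; simp only [hH, hfper x i]
  have hHnn : ∀ x, 0 ≤ H x := fun x => Real.rpow_nonneg (abs_nonneg _) p
  set L : ℝ := p * Ca ^ (p - 1) * Ca with hL
  have hL0 : 0 ≤ L := by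
    have : (0:ℝ) ≤ Ca ^ (p-1) := Real.rpow_nonneg hCa0 _
    positivity
  have hlip : ∀ u v : Fin d → ℝ, |G u - G v| ≤ L * ‖u - v‖ := by
    intro u v
    have h1 : |G u - G v| ≤ p * Ca ^ (p - 1) * |(|a u| - |a v|)| :=
      rpow_mono_bound hp hCa0 _ _ (abs_nonneg _) (abs_nonneg _) (habs u) (habs v)
    refine h1.trans ?_
    have h2 : |(|a u| - |a v|)| ≤ |a u - a v| := abs_abs_sub_abs_le_abs_sub _ _
    have h3 : |a u - a v| ≤ Ca * ‖u - v‖ := halip u v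
    have h4 : (0:ℝ) ≤ p * Ca ^ (p-1) := by
      have : (0:ℝ) ≤ Ca ^ (p-1) := Real.rpow_nonneg hCa0 _
      positivity
    calc p * Ca ^ (p - 1) * |(|a u| - |a v|)| ≤ p * Ca ^ (p - 1) * (Ca * ‖u - v‖) := by
          nlinarith [h2.trans h3]
      _ = L * ‖u - v‖ := by rw [hL]; ring
  have hest := key_estimate d σ hσ G H hGc hHc hHper hHnn L hL0 hlip
  -- notation
  set X := ∫ x in B, G x * H ((σ:ℝ) • x) with hX
  set A := ∫ x in B, G x with hA
  set F := ∫ x in B, H x with hF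
  have hXnn : 0 ≤ X := setIntegral_nonneg measurableSet_Icc fun x _ =>
    mul_nonneg (Real.rpow_nonneg (abs_nonneg _) _) (hHnn _)
  have hAnn : 0 ≤ A := setIntegral_nonneg measurableSet_Icc fun x _ =>
    Real.rpow_nonneg (abs_nonneg _) _
  have hFnn : 0 ≤ F := setIntegral_nonneg measurableSet_Icc fun x _ => hHnn x
  set Y := ((2*π)^d)⁻¹ * A * F with hY
  have hYnn : 0 ≤ Y := by
    have : (0:ℝ) ≤ ((2*π)^d)⁻¹ := by positivity
    positivity
  -- LpBox identifications
  have hLp1 : LpBox d p (fun x => a x * f ((σ : ℝ) • x)) = X ^ (1/p) := by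
    rw [LpBox, hX]
    congr 1
    refine setIntegral_congr_fun measurableSet_Icc fun x _ => ?_
    rw [abs_mul, Real.mul_rpow (abs_nonneg _) (abs_nonneg _)]
  have hLp2 : LpBox d p a = A ^ (1/p) := rfl
  have hLp3 : LpBox d p f = F ^ (1/p) := rfl
  -- constant identification
  have hconst : (2 * π) ^ (-(d : ℝ) / p) * LpBox d p a * LpBox d p f = Y ^ (1/p) := by
    rw [hLp2, hLp3, hY, Real.mul_rpow (by positivity) hFnn,
      Real.mul_rpow (by positivity) hAnn]
    have e1 : (((2*π)^d)⁻¹ : ℝ) = (2*π) ^ (-(d:ℝ)) := by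
      rw [Real.rpow_neg hπ.le, Real.rpow_natCast]
    have e2 : ((2*π) ^ (-(d:ℝ))) ^ (1/p) = (2*π) ^ (-(d:ℝ)/p) := by
      rw [← Real.rpow_mul hπ.le]
      congr 1
      ring
    rw [e1, e2]
  rw [hLp1, hconst]
  -- apply root inequality
  have hq0 : (0:ℝ) ≤ 1/p := by positivity
  have hq1 : 1/p ≤ 1 := by
    rw [div_le_one hp0]; exact hp
  have hroot : |X ^ (1/p) - Y ^ (1/p)| ≤ |X - Y| ^ (1/p) :=
    abs_rpow_root_sub hXnn hYnn hq0 hq1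
  refine hroot.trans ?_
  have hbound : |X - Y| ≤ 2 * π * L / σ * F := hest
  have hstep : |X - Y| ^ (1/p) ≤ (2 * π * L / σ * F) ^ (1/p) :=
    Real.rpow_le_rpow (abs_nonneg _) hbound hq0
  refine hstep.trans (le_of_eq ?_)
  -- compute the RHS
  have hCap : Ca ^ (p - 1) * Ca = Ca ^ p := by
    nth_rewrite 2 [← Real.rpow_one Ca]
    rw [← Real.rpow_add' hCa0 (by linarith : p - 1 + 1 ≠ 0)]
    norm_num
  have e3 : 2 * π * L / σ * F = (2 * π * p) * (Ca ^ p) * ((σ:ℝ)⁻¹) * F := by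
    rw [hL, ← hCap, div_eq_mul_inv]; ring
  rw [e3]
  rw [Real.mul_rpow (by positivity) hFnn, Real.mul_rpow (by positivity) (by positivity),
    Real.mul_rpow (by positivity) (Real.rpow_nonneg hCa0 p)]
  have e4 : (Ca ^ p) ^ (1/p) = Ca := by
    rw [← Real.rpow_mul hCa0]
    rw [mul_one_div, div_self hp0.ne', Real.rpow_one]
  have e5 : ((σ:ℝ)⁻¹) ^ (1/p) = (σ:ℝ) ^ (-(1/p)) := by
    rw [← Real.rpow_neg_one, ← Real.rpow_mul hσR.le]
    congr 1
    ring
  rw [e4, e5, hLp3]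
  ring
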